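/- Let ε > 0, p₀ ∈ (1/2,1), h(p₀) + ε < log 2, and for each k let L_{ε,k} be the set of rationals j/k, j ∈ {0,…,k}, with -(j/k) log p₀ - (1 - j/k) log(1-p₀) ∈ [h(p₀)-ε, h(p₀)+ε]. Then lim_{k→∞} (1/k) log ∑_{j : j/k ∈ L_{ε,k}} C(k,j) = h(l⁻), where l⁻ = p₀ - ε/(log p₀ - log(1-p₀)) and h is binary entropy. -/

import Mathlib

open scoped Classical

/-- Binary Shannon entropy (natural logarithm). -/
noncomputable def binEnt (x : ℝ) : ℝ := -x * Real.log x - (1 - x) * Real.log (1 - x)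

lemma binEnt_eq (x : ℝ) : binEnt x = Real.binEntropy x := by
  simp [binEnt, Real.binEntropy, Real.log_inv]; ring

lemma sum_term (k : ℕ) (x : ℝ) :
    ∑ i ∈ Finset.range (k+1), (k.choose i : ℝ) * x^i * (1-x)^(k-i) = 1 := by
  have h := add_pow x (1-x) k
  simp only [add_sub_cancel, one_pow] at h
  calc ∑ i ∈ Finset.range (k+1), (k.choose i : ℝ) * x^i * (1-x)^(k-i)
      = ∑ m ∈ Finset.range (k + 1), x ^ m * (1 - x) ^ (k - m) * (k.choose m : ℝ) :=
        Finset.sum_congr rfl fun i _ => by ring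
    _ = 1 := h.symm

lemma term_step (k j i : ℕ) (hik : i < k) :
    ((k.choose (i+1) : ℝ) * ((j:ℝ)/k)^(i+1) * (1-(j:ℝ)/k)^(k-(i+1))
      - (k.choose i : ℝ) * ((j:ℝ)/k)^i * (1-(j:ℝ)/k)^(k-i))
    = ((j:ℝ)/k)^i * (1-(j:ℝ)/k)^(k-(i+1)) *
        ((k.choose (i+1) : ℝ) * ((j:ℝ)/k) - (k.choose i : ℝ) * (1-(j:ℝ)/k)) := by
  have h1 : k - i = (k - (i+1)) + 1 := by omega
  rw [h1, pow_succ, pow_succ]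
  ring

lemma cmp_core (k j i : ℕ) (hj : j ≤ k) (hik : i < k)
    (hnat : (k - j) * (i+1) ≤ (k - i) * j) :
    (k.choose i : ℝ) * (1-(j:ℝ)/k) ≤ (k.choose (i+1) : ℝ) * ((j:ℝ)/k) := by
  have hk : 0 < (k:ℝ) := by
    have : 0 < k := by omega
    exact_mod_cast this
  have hid : k.choose (i+1) * (i+1) = k.choose i * (k - i) := Nat.choose_succ_right_eq k i
  have hnat2 : k.choose i * ((k - j) * (i+1)) ≤ k.choose (i+1) * (i+1) * j := by
    rw [hid, Nat.mul_assoc]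
    exact Nat.mul_le_mul_left _ hnat
  have hcast : ((k - j : ℕ) : ℝ) = (k:ℝ) - j := by rw [Nat.cast_sub hj]
  have hR : ((k.choose i : ℝ)) * (((k:ℝ) - j) * ((i:ℝ)+1)) ≤ (k.choose (i+1) : ℝ) * ((i:ℝ)+1) * j := by
    calc ((k.choose i : ℝ)) * (((k:ℝ) - j) * ((i:ℝ)+1))
        = ((k.choose i * ((k - j) * (i+1)) : ℕ) : ℝ) := by push_cast [hcast]; ring
      _ ≤ ((k.choose (i+1) * (i+1) * j : ℕ) : ℝ) := by exact_mod_cast hnat2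
      _ = (k.choose (i+1) : ℝ) * ((i:ℝ)+1) * j := by push_cast; ring
  have key : (k.choose i : ℝ) * ((k:ℝ) - j) ≤ (k.choose (i+1) : ℝ) * j := by
    have hi1 : (0:ℝ) < (i:ℝ) + 1 := by positivity
    nlinarith [hR]
  have h1x : (1 - (j:ℝ)/k) = ((k:ℝ) - j)/k := by field_simp
  rw [h1x, mul_div_assoc', mul_div_assoc', div_le_div_iff₀ hk hk]
  nlinarith [key, hk]

lemma cmp_up (k j i : ℕ) (hj : j ≤ k) (h : i + 1 ≤ j) :
    (k.choose i : ℝ) * (1-(j:ℝ)/k) ≤ (k.choose (i+1) : ℝ) * ((j:ℝ)/k) := by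
  apply cmp_core k j i hj (by omega)
  calc (k - j) * (i+1) ≤ (k - i) * (i+1) := by apply Nat.mul_le_mul_right; omega
    _ ≤ (k - i) * j := by apply Nat.mul_le_mul_left; omega

lemma cmp_down' (k j i : ℕ) (hj : j ≤ k) (hik : i < k) (h : j ≤ i) :
    (k.choose (i+1) : ℝ) * ((j:ℝ)/k) ≤ (k.choose i : ℝ) * (1-(j:ℝ)/k) := by
  have hk : 0 < (k:ℝ) := by
    have : 0 < k := by omega
    exact_mod_cast this
  have hnat : (k - i) * j ≤ (k - j) * (i+1) := by
    calc (k - i) * j ≤ (k - j) * j := by apply Nat.mul_le_mul_right; omega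
      _ ≤ (k - j) * (i+1) := by apply Nat.mul_le_mul_left; omega
  have hid : k.choose (i+1) * (i+1) = k.choose i * (k - i) := Nat.choose_succ_right_eq k i
  have hnat2 : k.choose (i+1) * (i+1) * j ≤ k.choose i * ((k - j) * (i+1)) := by
    rw [hid, Nat.mul_assoc]
    exact Nat.mul_le_mul_left _ hnat
  have hcast : ((k - j : ℕ) : ℝ) = (k:ℝ) - j := by rw [Nat.cast_sub hj]
  have hR : (k.choose (i+1) : ℝ) * ((i:ℝ)+1) * j ≤ ((k.choose i : ℝ)) * (((k:ℝ) - j) * ((i:ℝ)+1)) := by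
    calc (k.choose (i+1) : ℝ) * ((i:ℝ)+1) * j
        = ((k.choose (i+1) * (i+1) * j : ℕ) : ℝ) := by push_cast; ring
      _ ≤ ((k.choose i * ((k - j) * (i+1)) : ℕ) : ℝ) := by exact_mod_cast hnat2
      _ = ((k.choose i : ℝ)) * (((k:ℝ) - j) * ((i:ℝ)+1)) := by push_cast [hcast]; ring
  have key : (k.choose (i+1) : ℝ) * j ≤ (k.choose i : ℝ) * ((k:ℝ) - j) := by
    have hi1 : (0:ℝ) < (i:ℝ) + 1 := by positivity
    nlinarith [hR]
  have h1x : (1 - (j:ℝ)/k) = ((k:ℝ) - j)/k := by field_simp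
  rw [h1x, mul_div_assoc', mul_div_assoc', div_le_div_iff₀ hk hk]
  nlinarith [key, hk]

noncomputable def bterm (k j i : ℕ) : ℝ :=
  (k.choose i : ℝ) * ((j:ℝ)/k)^i * (1-(j:ℝ)/k)^(k-i)

lemma term_le_max (k j : ℕ) (hj : j ≤ k) (hk : 0 < k) :
    ∀ i, i ≤ k → bterm k j i ≤ bterm k j j := by
  have hkR : (0:ℝ) < k := by exact_mod_cast hk
  have hx0 : (0:ℝ) ≤ (j:ℝ)/k := by positivity
  have hx1 : (j:ℝ)/k ≤ 1 := by
    rw [div_le_one hkR]; exact_mod_cast hj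
  have h1x : (0:ℝ) ≤ 1 - (j:ℝ)/k := by linarith
  have su : ∀ i, i + 1 ≤ j → bterm k j i ≤ bterm k j (i+1) := by
    intro i hi
    have hik : i < k := by omega
    have := term_step k j i hik
    unfold bterm
    nlinarith [cmp_up k j i hj hi, pow_nonneg hx0 i, pow_nonneg h1x (k-(i+1)),
      mul_nonneg (pow_nonneg hx0 i) (pow_nonneg h1x (k-(i+1)))]
  have sd : ∀ i, j ≤ i → i < k → bterm k j (i+1) ≤ bterm k j i := by
    intro i hi hik
    have := term_step k j i hik
    unfold bterm
    nlinarith [cmp_down' k j i hj hik hi,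
      mul_nonneg (pow_nonneg hx0 i) (pow_nonneg h1x (k-(i+1)))]
  have up : ∀ m, m ≤ j → bterm k j (j - m) ≤ bterm k j j := by
    intro m
    induction m with
    | zero => simp
    | succ n ih =>
      intro hnj
      have h1 : j - (n+1) + 1 = j - n := by omega
      calc bterm k j (j - (n+1)) ≤ bterm k j (j - (n+1) + 1) := su _ (by omega)
        _ = bterm k j (j - n) := by rw [h1]
        _ ≤ bterm k j j := ih (by omega)
  have down : ∀ m, j + m ≤ k → bterm k j (j + m) ≤ bterm k j j := by
    intro m
    induction m with
    | zero => simp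
    | succ n ih =>
      intro hnk
      calc bterm k j (j + (n+1)) = bterm k j ((j+n) + 1) := by ring_nf
        _ ≤ bterm k j (j + n) := sd _ (by omega) (by omega)
        _ ≤ bterm k j j := ih (by omega)
  intro i hi
  rcases le_or_gt i j with h | h
  · have : i = j - (j - i) := by omega
    rw [this]; exact up (j - i) (by omega)
  · have : i = j + (i - j) := by omega
    rw [this]; exact down (i - j) (by omega)

lemma exp_ident (k j : ℕ) (hk : 0 < k) (hj : j ≤ k) :
    Real.exp ((k:ℝ) * binEnt ((j:ℝ)/k)) * (((j:ℝ)/k)^j * (1-(j:ℝ)/k)^(k-j)) = 1 := by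
  have hkR : (0:ℝ) < k := by exact_mod_cast hk
  rcases Nat.eq_zero_or_pos j with h0 | hj0
  · subst h0; simp [binEnt]
  rcases eq_or_lt_of_le hj with hjk | hjk
  · subst hjk
    have : (j:ℝ)/j = 1 := div_self (ne_of_gt hkR)
    simp [this, binEnt]
  · -- 0 < j < k
    set x : ℝ := (j:ℝ)/k with hx
    have hx0 : 0 < x := by positivity
    have hx1 : x < 1 := by
      rw [hx, div_lt_one hkR]; exact_mod_cast hjk
    have h1x : 0 < 1 - x := by linarith
    have hkx : (k:ℝ) * x = (j:ℝ) := by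
      rw [hx]; field_simp
    have hkx2 : (k:ℝ) * (1 - x) = ((k - j : ℕ):ℝ) := by
      rw [Nat.cast_sub hj, mul_sub, mul_one, hkx]
    have : (k:ℝ) * binEnt x = -((j:ℝ) * Real.log x) - (((k-j:ℕ)):ℝ) * Real.log (1-x) := by
      rw [binEnt]; rw [← hkx, ← hkx2]; ring
    rw [this, sub_eq_add_neg, Real.exp_add, Real.exp_neg, Real.exp_neg,
      Real.exp_nat_mul, Real.exp_nat_mul, Real.exp_log hx0, Real.exp_log h1x]
    field_simp

lemma p_pos (k j : ℕ) (hk : 0 < k) (hj : j ≤ k) :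
    0 < ((j:ℝ)/k)^j * (1-(j:ℝ)/k)^(k-j) := by
  have hkR : (0:ℝ) < k := by exact_mod_cast hk
  have h1 : 0 < ((j:ℝ)/k)^j := by
    rcases Nat.eq_zero_or_pos j with h0 | hj0
    · simp [h0]
    · have : (0:ℝ) < (j:ℝ)/k := by positivity
      positivity
  have h2 : 0 < (1-(j:ℝ)/k)^(k-j) := by
    rcases eq_or_lt_of_le hj with hjk | hjk
    · simp [hjk]
    · have : (j:ℝ)/k < 1 := by rw [div_lt_one hkR]; exact_mod_cast hjk
      have : (0:ℝ) < 1 - (j:ℝ)/k := by linarith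
      positivity
  positivity

lemma choose_le_exp (k j : ℕ) (hk : 0 < k) (hj : j ≤ k) :
    (k.choose j : ℝ) ≤ Real.exp ((k:ℝ) * binEnt ((j:ℝ)/k)) := by
  have hkR : (0:ℝ) < k := by exact_mod_cast hk
  have hone : bterm k j j ≤ 1 := by
    rw [← sum_term k ((j:ℝ)/k)]
    apply Finset.single_le_sum (f := fun i => (k.choose i : ℝ) * ((j:ℝ)/k)^i * (1-(j:ℝ)/k)^(k-i))
    · intro i hi
      have hx0 : (0:ℝ) ≤ (j:ℝ)/k := by positivity
      have hx1 : (j:ℝ)/k ≤ 1 := by rw [div_le_one hkR]; exact_mod_cast hj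
      have : (0:ℝ) ≤ 1 - (j:ℝ)/k := by linarith
      positivity
    · exact Finset.mem_range.2 (by omega)
  have hp := p_pos k j hk hj
  have hid := exp_ident k j hk hj
  unfold bterm at hone
  rw [mul_assoc] at hone
  apply le_of_mul_le_mul_right _ hp
  rw [hid]
  exact hone

lemma exp_le_choose (k j : ℕ) (hk : 0 < k) (hj : j ≤ k) :
    Real.exp ((k:ℝ) * binEnt ((j:ℝ)/k)) / (k+1) ≤ (k.choose j : ℝ) := by
  have hkR : (0:ℝ) < k := by exact_mod_cast hk
  have hmax := term_le_max k j hj hk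
  have hone : (1:ℝ) ≤ ((k:ℝ)+1) * bterm k j j := by
    calc (1:ℝ) = ∑ i ∈ Finset.range (k+1), (k.choose i : ℝ) * ((j:ℝ)/k)^i * (1-(j:ℝ)/k)^(k-i) :=
          (sum_term k ((j:ℝ)/k)).symm
      _ ≤ ∑ _i ∈ Finset.range (k+1), bterm k j j := by
          apply Finset.sum_le_sum
          intro i hi
          exact hmax i (Nat.lt_succ_iff.mp (Finset.mem_range.mp hi))
      _ = ((k:ℝ)+1) * bterm k j j := by
          rw [Finset.sum_const, Finset.card_range]; push_cast; ring
  have hp := p_pos k j hk hj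
  have hid := exp_ident k j hk hj
  unfold bterm at hone
  rw [mul_assoc] at hone
  apply le_of_mul_le_mul_right _ hp
  have hk1 : (0:ℝ) < (k:ℝ) + 1 := by positivity
  rw [div_mul_eq_mul_div, hid]
  rw [div_le_iff₀ hk1]
  nlinarith [hone]

lemma lower_aux (k j : ℕ) (hk : 0 < k) (hjk : j ≤ k) (F : Finset ℕ) (hjF : j ∈ F) :
    binEnt ((j:ℝ)/k) - Real.log ((k:ℝ)+1)/k ≤
      (1/(k:ℝ)) * Real.log (∑ i ∈ F, (k.choose i : ℝ)) := by
  have hkR : (0:ℝ) < k := by exact_mod_cast hk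
  have hCle : (k.choose j : ℝ) ≤ ∑ i ∈ F, (k.choose i : ℝ) :=
    Finset.single_le_sum (f := fun i => (k.choose i : ℝ)) (fun i _ => by positivity) hjF
  have h1 := exp_le_choose k j hk hjk
  have h2 : Real.log (Real.exp ((k:ℝ) * binEnt ((j:ℝ)/k)) / ((k:ℝ)+1)) ≤
      Real.log (∑ i ∈ F, (k.choose i : ℝ)) :=
    Real.log_le_log (by positivity) (h1.trans hCle)
  rw [Real.log_div (Real.exp_ne_zero _) (by positivity), Real.log_exp] at h2
  calc binEnt ((j:ℝ)/k) - Real.log ((k:ℝ)+1)/k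
      = (1/(k:ℝ)) * ((k:ℝ) * binEnt ((j:ℝ)/k) - Real.log ((k:ℝ)+1)) := by field_simp
    _ ≤ _ := mul_le_mul_of_nonneg_left h2 (by positivity)

lemma upper_aux (k j : ℕ) (hk : 0 < k) (hjk : j ≤ k) (c : ℝ) (F : Finset ℕ)
    (hF : F ⊆ Finset.range (k+1)) (hjF : j ∈ F)
    (hterm : ∀ i ∈ F, (k.choose i : ℝ) ≤ Real.exp ((k:ℝ) * c)) :
    (1/(k:ℝ)) * Real.log (∑ i ∈ F, (k.choose i : ℝ)) ≤ c + Real.log ((k:ℝ)+1)/k := by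
  have hkR : (0:ℝ) < k := by exact_mod_cast hk
  have hCpos : (0:ℝ) < (k.choose j : ℝ) := by exact_mod_cast Nat.choose_pos hjk
  have hSpos : (0:ℝ) < ∑ i ∈ F, (k.choose i : ℝ) :=
    lt_of_lt_of_le hCpos (Finset.single_le_sum (f := fun i => (k.choose i : ℝ)) (fun i _ => by positivity) hjF)
  have hSle : (∑ i ∈ F, (k.choose i : ℝ)) ≤ ((k:ℝ)+1) * Real.exp ((k:ℝ)*c) := by
    calc (∑ i ∈ F, (k.choose i : ℝ)) ≤ ∑ _i ∈ F, Real.exp ((k:ℝ)*c) :=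
          Finset.sum_le_sum hterm
      _ = (F.card : ℝ) * Real.exp ((k:ℝ)*c) := by rw [Finset.sum_const, nsmul_eq_mul]
      _ ≤ ((k:ℝ)+1) * Real.exp ((k:ℝ)*c) := by
          apply mul_le_mul_of_nonneg_right ?_ (le_of_lt (Real.exp_pos _))
          have hcard : F.card ≤ k + 1 := by
            simpa using Finset.card_le_card hF
          calc (F.card : ℝ) ≤ ((k+1 : ℕ) : ℝ) := by exact_mod_cast hcard
            _ = (k:ℝ) + 1 := by push_cast; ring
  have hlogS : Real.log (∑ i ∈ F, (k.choose i : ℝ)) ≤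
      Real.log ((k:ℝ)+1) + (k:ℝ) * c := by
    rw [← Real.log_exp ((k:ℝ) * c), ← Real.log_mul (by positivity) (Real.exp_ne_zero _)]
    exact Real.log_le_log hSpos hSle
  calc (1/(k:ℝ)) * Real.log (∑ i ∈ F, (k.choose i : ℝ))
      ≤ (1/(k:ℝ)) * (Real.log ((k:ℝ)+1) + (k:ℝ) * c) :=
        mul_le_mul_of_nonneg_left hlogS (by positivity)
    _ = c + Real.log ((k:ℝ)+1)/k := by field_simp; ring

set_option maxHeartbeats 4000000 in
/-- The exponential growth rate of the size of the typical set of a Bernoulli(p₀) source is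
h(l⁻), where l⁻ = p₀ - ε/(log p₀ - log(1-p₀)). -/
theorem typical_set_growth_rate (p₀ ε : ℝ) (hp : p₀ ∈ Set.Ioo (1 / 2 : ℝ) 1) (hε : 0 < ε)
    (hsmall : binEnt p₀ + ε < Real.log 2) :
    Filter.Tendsto
      (fun k : ℕ => (1 / (k : ℝ)) *
        Real.log (∑ j ∈ (Finset.range (k + 1)).filter
          (fun j : ℕ => -((j : ℝ) / k) * Real.log p₀ - (1 - (j : ℝ) / k) * Real.log (1 - p₀) ∈
            Set.Icc (binEnt p₀ - ε) (binEnt p₀ + ε)),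
          (Nat.choose k j : ℝ)))
      Filter.atTop
      (nhds (binEnt (p₀ - ε / (Real.log p₀ - Real.log (1 - p₀))))) := by
  obtain ⟨hp1, hp2⟩ := hp
  have hq0 : 0 < 1 - p₀ := by linarith
  have hp0 : 0 < p₀ := by linarith
  have hD : 0 < Real.log p₀ - Real.log (1 - p₀) :=
    sub_pos.2 (Real.log_lt_log hq0 (by linarith))
  set lp := Real.log p₀ with hlp
  set lq := Real.log (1 - p₀) with hlq
  set l := p₀ - ε / (lp - lq) with hl
  set l' := p₀ + ε / (lp - lq) with hl'
  have hεD : 0 < ε / (lp - lq) := div_pos hε hD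
  have hl_lt_p : l < p₀ := by rw [hl]; linarith
  have hl1 : l < 1 := lt_trans hl_lt_p hp2
  have hll' : l < l' := by rw [hl, hl']; linarith
  have hbe : binEnt p₀ = -p₀ * lp - (1 - p₀) * lq := rfl
  -- 1/2 < l
  have hl_half : 1 / 2 < l := by
    have hp4 : p₀ * (1 - p₀) ≤ 1 / 4 := by nlinarith
    have hlog4 : lp + lq ≤ Real.log (1 / 4) := by
      rw [hlp, hlq, ← Real.log_mul (ne_of_gt hp0) (ne_of_gt hq0)]
      exact Real.log_le_log (by positivity) hp4
    have hlog14 : Real.log (1 / 4 : ℝ) = -(2 * Real.log 2) := by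
      rw [one_div, Real.log_inv, show (4:ℝ) = 2 ^ 2 by norm_num, Real.log_pow]
      push_cast; ring
    have hε2 : ε < (p₀ - 1 / 2) * (lp - lq) := by nlinarith [hsmall, hlog4, hlog14, hbe]
    have : ε / (lp - lq) < p₀ - 1 / 2 := (div_lt_iff₀ hD).2 (by nlinarith)
    rw [hl]; linarith
  -- characterization of the condition
  have hcond : ∀ (k j : ℕ), 0 < k →
      ((-((j:ℝ)/k) * lp - (1 - (j:ℝ)/k) * lq ∈ Set.Icc (binEnt p₀ - ε) (binEnt p₀ + ε)) ↔
        (l ≤ (j:ℝ)/k ∧ (j:ℝ)/k ≤ l')) := by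
    intro k j _
    rw [Set.mem_Icc, hbe]
    constructor
    · rintro ⟨h1, h2⟩
      constructor
      · have hxx : (p₀ - (j:ℝ)/k) * (lp - lq) ≤ ε := by nlinarith [h2]
        have := (le_div_iff₀ hD).2 hxx
        rw [hl]; linarith
      · have hxx : ((j:ℝ)/k - p₀) * (lp - lq) ≤ ε := by nlinarith [h1]
        have := (le_div_iff₀ hD).2 hxx
        rw [hl']; linarith
    · rintro ⟨h1, h2⟩
      have hx1 : (p₀ - (j:ℝ)/k) * (lp - lq) ≤ ε := by
        rw [← le_div_iff₀ hD]; rw [hl] at h1; linarith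
      have hx2 : ((j:ℝ)/k - p₀) * (lp - lq) ≤ ε := by
        rw [← le_div_iff₀ hD]; rw [hl'] at h2; linarith
      constructor <;> nlinarith
  -- continuity of binEnt
  have hcont : Continuous binEnt := by
    rw [show binEnt = Real.binEntropy from funext binEnt_eq]
    exact Real.binEntropy_continuous
  -- log(k+1)/k → 0
  have hA : Filter.Tendsto (fun k : ℕ => Real.log ((k:ℝ)+1) / ((k:ℝ)+1))
      Filter.atTop (nhds 0) := by
    have h0 : Filter.Tendsto (fun x : ℝ => Real.log x / x) Filter.atTop (nhds 0) :=
      Real.isLittleO_log_id_atTop.tendsto_div_nhds_zero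
    exact h0.comp (Filter.tendsto_atTop_add_const_right _ 1 tendsto_natCast_atTop_atTop)
  have hu : Filter.Tendsto (fun k : ℕ => Real.log ((k:ℝ)+1) / k) Filter.atTop (nhds 0) := by
    apply tendsto_of_tendsto_of_tendsto_of_le_of_le' tendsto_const_nhds
      (by simpa using hA.const_mul 2)
    · filter_upwards [Filter.eventually_ge_atTop 1] with k hk
      have hkR : (1:ℝ) ≤ (k:ℝ) := by exact_mod_cast hk
      exact div_nonneg (Real.log_nonneg (by linarith)) (by linarith)
    · filter_upwards [Filter.eventually_ge_atTop 1] with k hk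
      have hkR : (1:ℝ) ≤ (k:ℝ) := by exact_mod_cast hk
      have hlog : 0 ≤ Real.log ((k:ℝ)+1) := Real.log_nonneg (by linarith)
      rw [show 2*(Real.log ((k:ℝ)+1)/((k:ℝ)+1)) = (2*Real.log ((k:ℝ)+1))/((k:ℝ)+1) by ring,
        div_le_div_iff₀ (by linarith) (by linarith)]
      nlinarith [mul_nonneg hlog (by linarith : (0:ℝ) ≤ (k:ℝ) - 1)]
  -- jk/k → l
  have hratio : Filter.Tendsto (fun k : ℕ => ((⌈(k:ℝ)*l⌉₊ : ℝ)) / k) Filter.atTop (nhds l) := by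
    apply tendsto_of_tendsto_of_tendsto_of_le_of_le' tendsto_const_nhds
      (show Filter.Tendsto (fun k : ℕ => l + 1/(k:ℝ)) Filter.atTop (nhds l) by
        simpa using tendsto_const_nhds.add (tendsto_one_div_atTop_nhds_zero_nat (𝕜 := ℝ)))
    · filter_upwards [Filter.eventually_ge_atTop 1] with k hk
      have hkR : (0:ℝ) < k := by exact_mod_cast hk
      rw [le_div_iff₀ hkR]
      calc l * k = k * l := by ring
        _ ≤ _ := Nat.le_ceil _
    · filter_upwards [Filter.eventually_ge_atTop 1] with k hk
      have hkR : (0:ℝ) < k := by exact_mod_cast hk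
      rw [div_le_iff₀ hkR]
      have h1 : (⌈(k:ℝ)*l⌉₊ : ℝ) < (k:ℝ)*l + 1 :=
        Nat.ceil_lt_add_one (by positivity)
      calc (⌈(k:ℝ)*l⌉₊ : ℝ) ≤ (k:ℝ)*l + 1 := le_of_lt h1
        _ = (l + 1/k) * k := by field_simp
  -- eventual largeness
  have hE2 : ∀ᶠ k : ℕ in Filter.atTop, (1:ℝ) ≤ (k:ℝ) * (l' - l) :=
    (Filter.Tendsto.atTop_mul_const (by linarith) tendsto_natCast_atTop_atTop).eventually_ge_atTop 1
  have hE3 : ∀ᶠ k : ℕ in Filter.atTop, (1:ℝ) ≤ (k:ℝ) * (1 - l) :=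
    (Filter.Tendsto.atTop_mul_const (by linarith) tendsto_natCast_atTop_atTop).eventually_ge_atTop 1
  apply tendsto_of_tendsto_of_tendsto_of_le_of_le'
    (g := fun k : ℕ => binEnt ((⌈(k:ℝ)*l⌉₊ : ℝ)/k) - Real.log ((k:ℝ)+1)/k)
    (h := fun k : ℕ => binEnt l + Real.log ((k:ℝ)+1)/k)
  · simpa using ((hcont.tendsto l).comp hratio).sub hu
  · simpa using (tendsto_const_nhds (x := binEnt l)).add hu
  · -- lower bound
    filter_upwards [Filter.eventually_ge_atTop 1, hE2, hE3] with k hk1 hk2 hk3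
    have hkpos : 0 < k := hk1
    have hkR : (0:ℝ) < k := by exact_mod_cast hkpos
    set j := ⌈(k:ℝ)*l⌉₊ with hjdef
    have hjl : (k:ℝ)*l ≤ j := Nat.le_ceil _
    have hjlt : (j:ℝ) < (k:ℝ)*l + 1 := Nat.ceil_lt_add_one (by positivity)
    have hexp : (k:ℝ)*(1-l) = k - k*l := by ring
    have hjkR : (j:ℝ) < (k:ℝ) := by linarith
    have hjk : j < k := by exact_mod_cast hjkR
    have hcondj : l ≤ (j:ℝ)/k ∧ (j:ℝ)/k ≤ l' := by
      constructor
      · rw [le_div_iff₀ hkR]; linarith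
      · rw [div_le_iff₀ hkR]
        have : (k:ℝ)*(l'-l) = k*l' - k*l := by ring
        linarith
    exact lower_aux k j hkpos (le_of_lt hjk) _
      (Finset.mem_filter.2 ⟨Finset.mem_range.2 (by omega), (hcond k j hkpos).2 hcondj⟩)
  · -- upper bound
    filter_upwards [Filter.eventually_ge_atTop 1, hE2, hE3] with k hk1 hk2 hk3
    have hkpos : 0 < k := hk1
    have hkR : (0:ℝ) < k := by exact_mod_cast hkpos
    set j := ⌈(k:ℝ)*l⌉₊ with hjdef
    have hjl : (k:ℝ)*l ≤ j := Nat.le_ceil _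
    have hjlt : (j:ℝ) < (k:ℝ)*l + 1 := Nat.ceil_lt_add_one (by positivity)
    have hexp : (k:ℝ)*(1-l) = k - k*l := by ring
    have hjkR : (j:ℝ) < (k:ℝ) := by linarith
    have hjk : j < k := by exact_mod_cast hjkR
    have hcondj : l ≤ (j:ℝ)/k ∧ (j:ℝ)/k ≤ l' := by
      constructor
      · rw [le_div_iff₀ hkR]; linarith
      · rw [div_le_iff₀ hkR]
        have : (k:ℝ)*(l'-l) = k*l' - k*l := by ring
        linarith
    apply upper_aux k j hkpos (le_of_lt hjk) (binEnt l) _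
      (Finset.filter_subset _ _)
      (Finset.mem_filter.2 ⟨Finset.mem_range.2 (by omega), (hcond k j hkpos).2 hcondj⟩)
    intro i hi
    obtain ⟨hir, hic⟩ := Finset.mem_filter.mp hi
    have hik : i ≤ k := by
      have := Finset.mem_range.mp hir; omega
    have hli : l ≤ (i:ℝ)/k := ((hcond k i hkpos).1 hic).1
    have hmono : binEnt ((i:ℝ)/k) ≤ binEnt l := by
      rw [binEnt_eq, binEnt_eq]
      apply Real.binEntropy_strictAntiOn.antitoneOn ?_ ?_ hli
      · exact ⟨by rw [show ((2:ℝ)⁻¹ : ℝ) = 1/2 by norm_num]; linarith, le_of_lt hl1⟩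
      · refine ⟨by rw [show ((2:ℝ)⁻¹ : ℝ) = 1/2 by norm_num]; linarith, ?_⟩
        rw [div_le_one hkR]; exact_mod_cast hik
    calc (k.choose i : ℝ) ≤ Real.exp ((k:ℝ) * binEnt ((i:ℝ)/k)) :=
          choose_le_exp k i hkpos hik
      _ ≤ Real.exp ((k:ℝ) * binEnt l) :=
          Real.exp_le_exp.2 (mul_le_mul_of_nonneg_left hmono (le_of_lt hkR))
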